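/- Let μ ∈ ℝ, σ > 0, and let X be distributed according to the Gaussian measure on ℝ with mean μ and variance σ². Let ε ∈ (0, 1) and let q ∈ ℝ satisfy Φ(q) = 1 − ε, where Φ is the standard Gaussian cumulative distribution function. Then for all reals a, b, c with b ≠ 0: the lower-sided chance constraint P[c ≤ a + b·X] ≥ 1 − ε holds if and only if the deterministic constraint a + b·μ − q·|b|·σ ≥ c holds. -/

import Mathlib

open ProbabilityTheory

open MeasureTheory Set
open scoped ENNReal

lemma std_map_neg : (gaussianReal 0 1).map (fun x => -x) = gaussianReal 0 1 := by
  have h := gaussianReal_map_const_mul (μ := 0) (v := 1) (-1)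
  simp only [neg_one_mul, neg_zero] at h
  convert h using 2
  ext
  norm_num

lemma std_Ici (t : ℝ) :
    gaussianReal 0 1 (Ici t) = ENNReal.ofReal (cdf (gaussianReal 0 1) (-t)) := by
  rw [ofReal_cdf]
  conv_lhs => rw [← std_map_neg]
  rw [Measure.map_apply measurable_neg measurableSet_Ici]
  congr 1
  ext x
  simp [le_neg]

lemma std_strictMono : StrictMono (cdf (gaussianReal 0 1)) := by
  intro x y hxy
  have h1 : (0:ℝ≥0∞) < gaussianReal 0 1 (Ioc x y) := by
    rw [pos_iff_ne_zero]
    intro h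
    have := (gaussianReal_absolutelyContinuous' 0 (by norm_num)) h
    rw [Real.volume_Ioc] at this
    simp only [ENNReal.ofReal_eq_zero] at this
    linarith
  have h2 : gaussianReal 0 1 (Iic x) + gaussianReal 0 1 (Ioc x y) = gaussianReal 0 1 (Iic y) := by
    rw [← measure_union (by simp [Set.disjoint_left]; intro a ha h; linarith) measurableSet_Ioc]
    congr 1
    ext z
    simp only [mem_union, mem_Iic, mem_Ioc]
    constructor
    · rintro (h | ⟨_, h⟩) <;> linarith
    · intro h
      rcases le_or_gt z x with h' | h'
      · exact Or.inl h'
      · exact Or.inr ⟨h', h⟩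
  have hx := ofReal_cdf (gaussianReal 0 1) x
  have hy := ofReal_cdf (gaussianReal 0 1) y
  have hfin : gaussianReal 0 1 (Iic y) < ⊤ := measure_lt_top _ _
  rw [← ENNReal.ofReal_lt_ofReal_iff_of_nonneg (cdf_nonneg _ _), hx, hy, ← h2]
  exact ENNReal.lt_add_right (by rw [← hx]; exact ENNReal.ofReal_ne_top) h1.ne'

lemma gaussian_as_map (μ σ : ℝ) (hσ : 0 < σ) :
    gaussianReal μ ⟨σ ^ 2, sq_nonneg σ⟩ = (gaussianReal 0 1).map (fun z => σ * z + μ) := by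
  have h1 : (gaussianReal 0 1).map (fun z => σ * z) = gaussianReal 0 ⟨σ ^ 2, sq_nonneg σ⟩ := by
    have := gaussianReal_map_const_mul (μ := 0) (v := 1) σ
    rw [this]; congr 1
    · simp
    · simp; rfl
  have h2 : ((gaussianReal 0 1).map (fun z => σ * z)).map (fun x => x + μ)
      = (gaussianReal 0 1).map (fun z => σ * z + μ) := by
    rw [Measure.map_map (by fun_prop) (by fun_prop)]
    rfl
  rw [← h2, h1]
  have := gaussianReal_map_add_const (μ := 0) (v := ⟨σ ^ 2, sq_nonneg σ⟩) μ
  rw [this, zero_add]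

lemma main_measure (μ σ : ℝ) (hσ : 0 < σ) (a b c : ℝ) (hb : b ≠ 0) :
    gaussianReal μ ⟨σ ^ 2, sq_nonneg σ⟩ {x : ℝ | c ≤ a + b * x}
      = ENNReal.ofReal (cdf (gaussianReal 0 1) ((a + b * μ - c) / (|b| * σ))) := by
  have hS : MeasurableSet {x : ℝ | c ≤ a + b * x} := by
    have : {x : ℝ | c ≤ a + b * x} = (fun x => a + b * x) ⁻¹' Ici c := rfl
    rw [this]
    exact (by fun_prop : Measurable fun x : ℝ => a + b * x) measurableSet_Ici
  rw [gaussian_as_map μ σ hσ, Measure.map_apply (by fun_prop) hS]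
  rcases lt_or_gt_of_ne hb with hbneg | hbpos
  · have habs : |b| = -b := abs_of_neg hbneg
    have hpre : (fun z => σ * z + μ) ⁻¹' {x : ℝ | c ≤ a + b * x}
        = Iic ((a + b * μ - c) / (|b| * σ)) := by
      ext z
      simp only [mem_preimage, mem_setOf_eq, mem_Iic, habs]
      rw [le_div_iff₀ (mul_pos (neg_pos.mpr hbneg) hσ)]
      constructor <;> intro h <;> nlinarith
    rw [hpre, ← ofReal_cdf]
  · have habs : |b| = b := abs_of_pos hbpos
    have hpre : (fun z => σ * z + μ) ⁻¹' {x : ℝ | c ≤ a + b * x}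
        = Ici (-((a + b * μ - c) / (|b| * σ))) := by
      ext z
      simp only [mem_preimage, mem_setOf_eq, mem_Ici, habs]
      rw [neg_le, le_div_iff₀ (mul_pos hbpos hσ)]
      constructor <;> intro h <;> nlinarith
    rw [hpre, std_Ici, neg_neg]


/-- Analytical reformulation of a lower-sided scalar Gaussian chance constraint: for `X`
Gaussian with mean `μ`, variance `σ²` (`σ > 0`), `ε ∈ (0,1)`, `q` the `(1−ε)`-quantile
of the standard Gaussian (`Φ(q) = 1 − ε`) and `b ≠ 0`,
`P[c ≤ a + b·X] ≥ 1 − ε ↔ a + b·μ − q·|b|·σ ≥ c`. -/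
theorem gaussian_chance_constraint_lower (μ σ : ℝ) (hσ : 0 < σ)
    (ε : ℝ) (hε : ε ∈ Set.Ioo (0 : ℝ) 1) (q : ℝ)
    (hq : cdf (gaussianReal 0 1) q = 1 - ε)
    (a b c : ℝ) (hb : b ≠ 0) :
    ENNReal.ofReal (1 - ε)
        ≤ gaussianReal μ ⟨σ ^ 2, sq_nonneg σ⟩ {x : ℝ | c ≤ a + b * x}
      ↔ a + b * μ - q * |b| * σ ≥ c := by
  rw [main_measure μ σ hσ a b c hb,
    ENNReal.ofReal_le_ofReal_iff (cdf_nonneg _ _), ← hq]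
  have hpos : 0 < |b| * σ := by positivity
  constructor
  · intro h
    have hqle : q ≤ (a + b * μ - c) / (|b| * σ) := std_strictMono.le_iff_le.mp h
    rw [le_div_iff₀ hpos] at hqle
    simp only [ge_iff_le]
    nlinarith
  · intro h
    apply std_strictMono.monotone
    rw [le_div_iff₀ hpos]
    simp only [ge_iff_le] at h
    nlinarith
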